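/- For all real s, t and all real τ ≥ 4, one has ϑ₂(πt, iτ)/ϑ₃(πs, iτ) < 0.09, where ϑ₂(z, iτ) = Σ_{n∈ℤ} e^{-πτ(n+1/2)²} e^{2iz(n+1/2)} and ϑ₃(z, iτ) = Σ_{n∈ℤ} e^{-πτn²} e^{2inz} (both real-valued for real z). -/

import Mathlib

/-- Real-valued theta function ϑ₃(z, iτ) = Σ_{n∈ℤ} e^{-πτn²} cos(2nz). -/
noncomputable def theta3R (z τ : ℝ) : ℝ :=
  ∑' n : ℤ, Real.exp (-Real.pi * τ * (n : ℝ) ^ 2) * Real.cos (2 * (n : ℝ) * z)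

/-- Real-valued theta function ϑ₂(z, iτ) = Σ_{n∈ℤ} e^{-πτ(n+1/2)²} cos(2z(n+1/2)). -/
noncomputable def theta2R (z τ : ℝ) : ℝ :=
  ∑' n : ℤ, Real.exp (-Real.pi * τ * ((n : ℝ) + 1 / 2) ^ 2) * Real.cos (2 * z * ((n : ℝ) + 1 / 2))

open Real

lemma exp_neg_pi_lt : Real.exp (-Real.pi) < 0.044 := by
  have h1 : (22.73 : ℝ) < Real.exp 3.14 := by
    refine lt_of_lt_of_le ?_ (Real.sum_le_exp_of_nonneg (by norm_num) 10)
    norm_num [Finset.sum_range_succ, Nat.factorial]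
  have h2 : Real.exp 3.14 < Real.exp Real.pi := Real.exp_lt_exp.mpr Real.pi_gt_d2
  have h3 : (22.73 : ℝ) < Real.exp Real.pi := h1.trans h2
  rw [Real.exp_neg]
  rw [inv_lt_comm₀ (Real.exp_pos _) (by norm_num)]
  linarith

lemma exp_neg_pi_lt_one : Real.exp (-Real.pi) < 1 :=
  Real.exp_lt_one_iff.mpr (neg_lt_zero.mpr Real.pi_pos)

set_option maxHeartbeats 1000000 in
/-- The dominating geometric series for θ₂. -/
lemma hasSum_G :
    HasSum (fun n : ℤ => Real.exp (-Real.pi * |2 * (n : ℝ) + 1|))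
      (2 * (Real.exp (-Real.pi) * (1 - Real.exp (-Real.pi) ^ 2)⁻¹)) := by
  set E := Real.exp (-Real.pi) with hE
  have hE0 : 0 < E := Real.exp_pos _
  have hE1 : E < 1 := exp_neg_pi_lt_one
  have hr0 : (0:ℝ) ≤ E ^ 2 := by positivity
  have hr1 : E ^ 2 < 1 := by nlinarith
  have hgeo : HasSum (fun n : ℕ => E * (E ^ 2) ^ n) (E * (1 - E ^ 2)⁻¹) :=
    (hasSum_geometric_of_lt_one hr0 hr1).mul_left E
  have key : ∀ n : ℕ, E * (E ^ 2) ^ n = Real.exp (-Real.pi * (2 * (n : ℝ) + 1)) := by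
    intro n
    have h : E * (E ^ 2) ^ n = E ^ (2 * n + 1) := by ring
    rw [h, hE, ← Real.exp_nat_mul]
    congr 1
    push_cast
    ring
  have h1 : HasSum (fun n : ℕ => Real.exp (-Real.pi * |2 * ((n : ℤ) : ℝ) + 1|))
      (E * (1 - E ^ 2)⁻¹) := by
    refine hgeo.congr_fun fun n => ?_
    rw [key n]
    congr 1
    rw [abs_of_nonneg (by positivity)]
    push_cast; ring
  have h2 : HasSum (fun n : ℕ => Real.exp (-Real.pi * |2 * ((-((n : ℤ)+1) : ℤ) : ℝ) + 1|))
      (E * (1 - E ^ 2)⁻¹) := by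
    refine hgeo.congr_fun fun n => ?_
    rw [key n]
    congr 1
    have h : (2 * ((-((n : ℤ)+1) : ℤ) : ℝ) + 1) = -(2 * (n : ℝ) + 1) := by push_cast; ring
    rw [h, abs_neg, abs_of_nonneg (by positivity)]
  have h3 := HasSum.of_nat_of_neg_add_one
    (f := fun n : ℤ => Real.exp (-Real.pi * |2 * (n : ℝ) + 1|)) h1 h2
  convert h3 using 1
  ring

set_option maxHeartbeats 1000000 in
/-- The dominating geometric series for θ₃. -/
lemma hasSum_H :
    HasSum (fun n : ℤ => Real.exp (-4 * Real.pi * |(n : ℝ)|))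
      ((1 - Real.exp (-Real.pi) ^ 4)⁻¹ * (1 + Real.exp (-Real.pi) ^ 4)) := by
  set E := Real.exp (-Real.pi) with hE
  have hE0 : 0 < E := Real.exp_pos _
  have hE1 : E < 1 := exp_neg_pi_lt_one
  have hr0 : (0:ℝ) ≤ E ^ 4 := by positivity
  have h2 : E ^ 2 < 1 := by nlinarith
  have hr1 : E ^ 4 < 1 := by nlinarith [sq_nonneg E]
  have hgeo : HasSum (fun n : ℕ => (E ^ 4) ^ n) ((1 - E ^ 4)⁻¹) :=
    hasSum_geometric_of_lt_one hr0 hr1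
  have key : ∀ n : ℕ, (E ^ 4) ^ n = Real.exp (-4 * Real.pi * (n : ℝ)) := by
    intro n
    rw [hE, ← pow_mul, ← Real.exp_nat_mul]
    congr 1
    push_cast
    ring
  have h1 : HasSum (fun n : ℕ => Real.exp (-4 * Real.pi * |((n : ℤ) : ℝ)|))
      ((1 - E ^ 4)⁻¹) := by
    refine hgeo.congr_fun fun n => ?_
    rw [key n]
    congr 1
    rw [abs_of_nonneg (by positivity)]
    push_cast; ring
  have h2' : HasSum (fun n : ℕ => Real.exp (-4 * Real.pi * |((-((n : ℤ)+1) : ℤ) : ℝ)|))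
      (E ^ 4 * (1 - E ^ 4)⁻¹) := by
    have hshift : HasSum (fun n : ℕ => (E ^ 4) ^ (n + 1)) (E ^ 4 * (1 - E ^ 4)⁻¹) :=
      (hgeo.mul_left (E ^ 4)).congr_fun fun n => by rw [pow_succ]; ring
    refine hshift.congr_fun fun n => ?_
    rw [key (n + 1)]
    congr 1
    have h : |((-((n : ℤ)+1) : ℤ) : ℝ)| = ((n : ℝ) + 1) := by
      rw [abs_of_nonpos (by push_cast; linarith)]
      push_cast; ring
    rw [h]
    push_cast; ring
  have h3 := HasSum.of_nat_of_neg_add_one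
    (f := fun n : ℤ => Real.exp (-4 * Real.pi * |(n : ℝ)|)) h1 h2'
  convert h3 using 1
  ring

lemma int_abs_le_sq (n : ℤ) : |(n : ℝ)| ≤ (n : ℝ) ^ 2 := by
  rcases eq_or_ne n 0 with rfl | h
  · simp
  · have h1 : (1:ℝ) ≤ |(n:ℝ)| := by
      rw [← Int.cast_abs]
      exact_mod_cast Int.one_le_abs h
    calc |(n:ℝ)| = 1 * |(n:ℝ)| := (one_mul _).symm
    _ ≤ |(n:ℝ)| * |(n:ℝ)| := by nlinarith
    _ = (n:ℝ)^2 := by rw [← abs_mul, ← sq, abs_sq]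

lemma theta2_bound (z τ : ℝ) (hτ : 4 ≤ τ) :
    |theta2R z τ| ≤ 2 * (Real.exp (-Real.pi) * (1 - Real.exp (-Real.pi) ^ 2)⁻¹) := by
  have hπ := Real.pi_pos
  rw [← Real.norm_eq_abs, theta2R]
  refine tsum_of_norm_bounded hasSum_G fun n => ?_
  rw [Real.norm_eq_abs, abs_mul]
  have habs1 : (1:ℝ) ≤ |2 * (n:ℝ) + 1| := by
    rcases le_or_gt 0 n with h | h
    · have : (0:ℝ) ≤ (n:ℝ) := by exact_mod_cast h
      rw [abs_of_nonneg (by linarith)]; linarith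
    · have hn1 : n ≤ -1 := by omega
      have : (n:ℝ) ≤ -1 := by exact_mod_cast hn1
      rw [abs_of_nonpos (by linarith)]; linarith
  have hsq : |2 * (n:ℝ) + 1| ≤ (2 * (n:ℝ) + 1) ^ 2 := by
    nlinarith [sq_abs (2 * (n:ℝ) + 1), abs_nonneg (2 * (n:ℝ) + 1)]
  calc |Real.exp (-Real.pi * τ * ((n : ℝ) + 1 / 2) ^ 2)| * |Real.cos (2 * z * ((n : ℝ) + 1 / 2))|
      ≤ Real.exp (-Real.pi * τ * ((n : ℝ) + 1 / 2) ^ 2) * 1 := by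
        rw [abs_of_nonneg (Real.exp_pos _).le]
        exact mul_le_mul_of_nonneg_left (abs_cos_le_one _) (Real.exp_pos _).le
    _ = Real.exp (-Real.pi * τ * ((n : ℝ) + 1 / 2) ^ 2) := mul_one _
    _ ≤ Real.exp (-Real.pi * |2 * (n:ℝ) + 1|) := by
        apply Real.exp_le_exp.mpr
        have h4 : Real.pi * |2 * (n:ℝ) + 1| ≤ Real.pi * (2 * (n:ℝ) + 1) ^ 2 :=
          mul_le_mul_of_nonneg_left hsq hπ.le
        nlinarith [sq_nonneg ((n:ℝ) + 1/2), mul_le_mul_of_nonneg_right hτ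
          (mul_nonneg hπ.le (sq_nonneg ((n:ℝ) + 1/2)))]

lemma theta3_lower (z τ : ℝ) (hτ : 4 ≤ τ) :
    2 - (1 - Real.exp (-Real.pi) ^ 4)⁻¹ * (1 + Real.exp (-Real.pi) ^ 4) ≤ theta3R z τ := by
  have hπ := Real.pi_pos
  set f : ℤ → ℝ := fun n => Real.exp (-Real.pi * τ * (n : ℝ) ^ 2) * Real.cos (2 * (n : ℝ) * z)
    with hf
  set H : ℤ → ℝ := fun n => Real.exp (-4 * Real.pi * |(n : ℝ)|) with hH
  have hbound : ∀ n : ℤ, ‖f n‖ ≤ H n := by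
    intro n
    rw [Real.norm_eq_abs, abs_mul]
    calc |Real.exp (-Real.pi * τ * (n : ℝ) ^ 2)| * |Real.cos (2 * (n : ℝ) * z)|
        ≤ Real.exp (-Real.pi * τ * (n : ℝ) ^ 2) * 1 := by
          rw [abs_of_nonneg (Real.exp_pos _).le]
          exact mul_le_mul_of_nonneg_left (abs_cos_le_one _) (Real.exp_pos _).le
      _ = Real.exp (-Real.pi * τ * (n : ℝ) ^ 2) := mul_one _
      _ ≤ H n := by
          apply Real.exp_le_exp.mpr
          have h1 := int_abs_le_sq n
          nlinarith [sq_nonneg (n:ℝ), mul_le_mul_of_nonneg_right hτ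
            (mul_nonneg hπ.le (sq_nonneg (n:ℝ)))]
  have hHsum : Summable H := hasSum_H.summable
  have hfsum : Summable f := Summable.of_norm_bounded hHsum hbound
  have hsplit : theta3R z τ = f 0 + ∑' n : ℤ, ite (n = 0) 0 (f n) := by
    rw [theta3R, ← hf]
    exact Summable.tsum_eq_add_tsum_ite hfsum 0
  have hf0 : f 0 = 1 := by simp [hf]
  have hHsplit : (∑' n : ℤ, H n) = H 0 + ∑' n : ℤ, ite (n = 0) 0 (H n) :=
    Summable.tsum_eq_add_tsum_ite hHsum 0
  have hH0 : H 0 = 1 := by simp [hH]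
  have htail : |∑' n : ℤ, ite (n = 0) 0 (f n)| ≤ ∑' n : ℤ, ite (n = 0) 0 (H n) := by
    rw [← Real.norm_eq_abs]
    have hsum2 : Summable (fun n : ℤ => ite (n = 0) 0 (H n)) := by
      refine Summable.of_norm_bounded hHsum fun n => ?_
      rw [Real.norm_eq_abs]
      have hpos : (0:ℝ) < H n := Real.exp_pos _
      split_ifs with h
      · simpa using hpos.le
      · rw [abs_of_nonneg hpos.le]
    refine tsum_of_norm_bounded hsum2.hasSum fun n => ?_
    split_ifs with h
    · simp
    · exact hbound n
  have hHval : ∑' n : ℤ, H n = (1 - Real.exp (-Real.pi) ^ 4)⁻¹ * (1 + Real.exp (-Real.pi) ^ 4) :=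
    hasSum_H.tsum_eq
  have htail' := (abs_le.mp htail).1
  have heq : ∑' n : ℤ, ite (n = 0) 0 (H n) = (∑' n : ℤ, H n) - 1 := by
    rw [hHsplit, hH0]; ring
  rw [heq, hHval] at htail'
  rw [hsplit, hf0]
  linarith

theorem theta2_div_theta3_small (s t τ : ℝ) (hτ : 4 ≤ τ) :
    theta2R (Real.pi * t) τ / theta3R (Real.pi * s) τ < 0.09 := by
  set E := Real.exp (-Real.pi) with hE
  have hE0 : 0 < E := Real.exp_pos _
  have hElt : E < 0.044 := exp_neg_pi_lt
  have hE2 : E ^ 2 < 0.002 := by nlinarith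
  have hE4 : E ^ 4 < 0.00001 := by nlinarith [pow_pos hE0 2]
  have hE4pos : (0:ℝ) < E ^ 4 := by positivity
  have h2inv : (1 - E ^ 2)⁻¹ ≤ (0.998 : ℝ)⁻¹ :=
    inv_anti₀ (by norm_num) (by nlinarith)
  have h4inv : (1 - E ^ 4)⁻¹ ≤ (0.99999 : ℝ)⁻¹ :=
    inv_anti₀ (by norm_num) (by nlinarith)
  have hA : |theta2R (Real.pi * t) τ| ≤ 2 * (E * (1 - E ^ 2)⁻¹) := theta2_bound _ τ hτ
  have hAnum : 2 * (E * (1 - E ^ 2)⁻¹) ≤ 2 * (0.044 * (0.998 : ℝ)⁻¹) := by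
    have h1 : E * (1 - E ^ 2)⁻¹ ≤ 0.044 * (0.998 : ℝ)⁻¹ :=
      mul_le_mul hElt.le h2inv (inv_nonneg.mpr (by nlinarith)) (by norm_num)
    linarith
  have hB : 2 - (1 - E ^ 4)⁻¹ * (1 + E ^ 4) ≤ theta3R (Real.pi * s) τ := theta3_lower _ τ hτ
  have hBnum : (1 - E ^ 4)⁻¹ * (1 + E ^ 4) ≤ (0.99999 : ℝ)⁻¹ * (1 + 0.00001) :=
    mul_le_mul h4inv (by nlinarith) (by positivity) (by norm_num)
  have h3pos : 0 < theta3R (Real.pi * s) τ := by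
    have h : (0.99999 : ℝ)⁻¹ * (1 + 0.00001) < 1.5 := by norm_num
    linarith
  rw [div_lt_iff₀ h3pos]
  have hub : theta2R (Real.pi * t) τ ≤ 2 * (0.044 * (0.998 : ℝ)⁻¹) :=
    le_trans (le_abs_self _) (le_trans hA hAnum)
  have hlb : 2 - (0.99999 : ℝ)⁻¹ * (1 + 0.00001) ≤ theta3R (Real.pi * s) τ := by linarith
  have c1 : (2 : ℝ) * (0.044 * (0.998 : ℝ)⁻¹) < 0.0885 := by norm_num
  have c2 : (0.09 : ℝ) * (2 - (0.99999 : ℝ)⁻¹ * (1 + 0.00001)) > 0.0899 := by norm_num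
  nlinarith
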